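/- arXiv:1709.01649 — 2 statements merged into one kernel-verified Lean document; each statement's English description precedes it below -/
import Mathlib

section
/- Let A be a unital C*-algebra, let ψ be a state on A, and let (Δ_n) be a characteristic sequence for ψ. Then for every state φ on A with φ ≠ ψ, one has limsup_{n→∞} |φ(Δ_n)| < 1. -/
open Filter Topology
open scoped ComplexOrder

/-- A state on a unital C⋆-algebra: a positive linear functional of norm one. -/
def IsState {A : Type*} [CStarAlgebra A] (φ : A →L[ℂ] ℂ) : Prop :=
  ‖φ‖ = 1 ∧ ∀ a : A, 0 ≤ φ (star a * a)

/-- A characteristic sequence for a state `ψ`: a sequence of norm-one elements with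
`ψ (Δ n) → 1` and `limsup ‖Δ n⋆ * a * Δ n‖ ≤ |ψ a|` for every `a`. -/
def IsCharacteristicSequence {A : Type*} [CStarAlgebra A] (ψ : A →L[ℂ] ℂ) (Δ : ℕ → A) : Prop :=
  (∀ n, ‖Δ n‖ = 1) ∧ Tendsto (fun n => ψ (Δ n)) atTop (nhds 1) ∧
    ∀ a : A, limsup (fun n => ‖star (Δ n) * a * Δ n‖) atTop ≤ ‖ψ a‖

section Aux

variable {A : Type*} [CStarAlgebra A]

lemma Stmt6Aux.pos_parts (φ : A →L[ℂ] ℂ) (hpos : ∀ a : A, 0 ≤ φ (star a * a)) (a : A) :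
    0 ≤ (φ (star a * a)).re ∧ (φ (star a * a)).im = 0 := by
  have := hpos a
  rw [Complex.le_def] at this
  exact ⟨this.1, this.2.symm⟩

lemma Stmt6Aux.expand_star_mul (c : ℂ) (x y : A) :
    star (x + c • y) * (x + c • y)
      = star x * x + c • (star x * y) + (starRingEnd ℂ c) • (star y * x)
        + ((starRingEnd ℂ c) * c) • (star y * y) := by
  simp only [star_add, star_smul, RCLike.star_def, add_mul, mul_add, smul_mul_assoc,
    mul_smul_comm, smul_smul]
  module

/-- Hermitian symmetry of the sesquilinear form of a positive functional. -/
lemma Stmt6Aux.herm (φ : A →L[ℂ] ℂ) (hpos : ∀ a : A, 0 ≤ φ (star a * a)) (x y : A) :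
    (starRingEnd ℂ) (φ (star y * x)) = φ (star x * y) := by
  have him : ∀ z : A, (φ (star z * z)).im = 0 := fun z => (pos_parts φ hpos z).2
  have hval : ∀ c : ℂ, (φ (star x * x)).im + (c * φ (star x * y)).im
      + ((starRingEnd ℂ c) * φ (star y * x)).im
      + (((starRingEnd ℂ c) * c) * φ (star y * y)).im = 0 := by
    intro c
    have h := him (x + c • y)
    rw [expand_star_mul] at h
    simpa [Complex.add_im] using h
  have h1 := hval 1
  have h2 := hval Complex.I
  simp only [map_one, one_mul, him x, him y, zero_add, Complex.add_im] at h1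
  simp only [Complex.conj_I, him x, him y, zero_add, Complex.add_im, neg_mul,
    Complex.neg_im, Complex.mul_im, Complex.I_re, Complex.I_im, Complex.I_mul_I] at h2
  have h2' : (φ (star x * y)).re - (φ (star y * x)).re = 0 := by
    norm_num at h2
    linarith
  apply Complex.ext
  · simp only [Complex.conj_re]; linarith
  · simp only [Complex.conj_im]
    have : (φ (star x * y)).im + (φ (star y * x)).im = 0 := by
      simpa using h1
    linarith

/-- Cauchy–Schwarz for positive functionals. -/
lemma Stmt6Aux.cs (φ : A →L[ℂ] ℂ) (hpos : ∀ a : A, 0 ≤ φ (star a * a)) (x y : A) :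
    ‖φ (star x * y)‖ ^ 2 ≤ (φ (star x * x)).re * (φ (star y * y)).re := by
  letI c : PreInnerProductSpace.Core ℂ A :=
    { inner := fun u v => φ (star u * v)
      conj_inner_symm := fun u v => herm φ hpos u v
      re_inner_nonneg := fun u => (pos_parts φ hpos u).1
      add_left := fun u v w => by simp [star_add, add_mul]
      smul_left := fun u v r => by simp [star_smul, smul_mul_assoc] }
  have h := InnerProductSpace.Core.inner_mul_inner_self_le (𝕜 := ℂ) (F := A) (c := c) x y
  have hyx : ‖φ (star y * x)‖ = ‖φ (star x * y)‖ := by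
    rw [← herm φ hpos x y]
    simp
  rw [sq]
  calc ‖φ (star x * y)‖ * ‖φ (star x * y)‖
      = ‖φ (star x * y)‖ * ‖φ (star y * x)‖ := by rw [hyx]
    _ ≤ (φ (star x * x)).re * (φ (star y * y)).re := h

/-- Cauchy–Schwarz, square-root form. -/
lemma Stmt6Aux.cs' (φ : A →L[ℂ] ℂ) (hpos : ∀ a : A, 0 ≤ φ (star a * a)) (x y : A) :
    ‖φ (star x * y)‖ ≤ Real.sqrt ((φ (star x * x)).re) * Real.sqrt ((φ (star y * y)).re) := by
  have h := cs φ hpos x y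
  have h2 := Real.sqrt_le_sqrt h
  rwa [Real.sqrt_sq (norm_nonneg _),
    Real.sqrt_mul (pos_parts φ hpos x).1] at h2

lemma Stmt6Aux.norm_one_le : ‖(1 : A)‖ ≤ 1 := by
  have h := CStarRing.norm_star_mul_self (x := (1 : A))
  rw [star_one, one_mul] at h
  nlinarith [norm_nonneg (1 : A)]

lemma Stmt6Aux.val_le (φ : A →L[ℂ] ℂ) (hn : ‖φ‖ = 1) (x : A) : ‖φ x‖ ≤ ‖x‖ := by
  simpa [hn] using φ.le_opNorm x

lemma Stmt6Aux.re_le_sq (φ : A →L[ℂ] ℂ) (hn : ‖φ‖ = 1) (a : A) :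
    (φ (star a * a)).re ≤ ‖a‖ ^ 2 := by
  calc (φ (star a * a)).re ≤ ‖φ (star a * a)‖ := Complex.re_le_norm _
    _ ≤ ‖star a * a‖ := val_le φ hn _
    _ = ‖a‖ ^ 2 := by rw [CStarRing.norm_star_mul_self, sq]

lemma Stmt6Aux.sqrt_re_le (φ : A →L[ℂ] ℂ) (hn : ‖φ‖ = 1) (a : A) :
    Real.sqrt ((φ (star a * a)).re) ≤ ‖a‖ := by
  have := Real.sqrt_le_sqrt (re_le_sq φ hn a)
  rwa [Real.sqrt_sq (norm_nonneg a)] at this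

/-- A state evaluated along a sequence of norm-one elements whose values tend to `1` in
absolute value must send `1` to `1`. -/
lemma Stmt6Aux.state_one (φ : A →L[ℂ] ℂ) (hn : ‖φ‖ = 1) (hpos : ∀ a : A, 0 ≤ φ (star a * a))
    (u : ℕ → A) (hu : ∀ n, ‖u n‖ = 1)
    (ht : Tendsto (fun n => ‖φ (u n)‖) atTop (𝓝 1)) : φ 1 = 1 := by
  have hb : ∀ n, ‖φ (u n)‖ ^ 2 ≤ (φ 1).re := by
    intro n
    have h := cs φ hpos 1 (u n)
    simp only [star_one, one_mul] at h
    refine h.trans ?_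
    have h1 : (φ (star (u n) * u n)).re ≤ 1 := by
      have := re_le_sq φ hn (u n)
      rwa [hu n, one_pow] at this
    have h0 : 0 ≤ (φ ((1 : A) * 1)).re := by
      have := (pos_parts φ hpos 1).1
      rwa [star_one] at this
    calc (φ 1).re * (φ (star (u n) * u n)).re ≤ (φ 1).re * 1 := by
            refine mul_le_mul_of_nonneg_left h1 ?_
            simpa using h0
      _ = (φ 1).re := mul_one _
  have hsq : Tendsto (fun n => ‖φ (u n)‖ ^ 2) atTop (𝓝 1) := by
    have := ht.mul ht
    simpa [sq] using this
  have hge : (1 : ℝ) ≤ (φ 1).re := le_of_tendsto hsq (Eventually.of_forall hb)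
  have hle : (φ 1).re ≤ 1 := by
    calc (φ 1).re ≤ ‖φ 1‖ := Complex.re_le_norm _
      _ ≤ ‖(1 : A)‖ := val_le φ hn 1
      _ ≤ 1 := norm_one_le
  have him : (φ 1).im = 0 := by
    have := (pos_parts φ hpos 1).2
    rwa [star_one, one_mul] at this
  apply Complex.ext
  · simp only [Complex.one_re]; linarith
  · simpa using him

end Aux

/-- if `(Δ n)` is a characteristic sequence for the state `ψ`, then
`limsup |φ (Δ n)| < 1` for every state `φ ≠ ψ`. -/
theorem stmt6 {A : Type*} [CStarAlgebra A]
    (ψ : A →L[ℂ] ℂ) (hψ : IsState ψ) (Δ : ℕ → A) (hΔ : IsCharacteristicSequence ψ Δ) :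
    ∀ φ : A →L[ℂ] ℂ, IsState φ → φ ≠ ψ →
      limsup (fun n => ‖φ (Δ n)‖) atTop < 1 := by
  classical
  obtain ⟨hψn, hψp⟩ := hψ
  obtain ⟨hΔn, hΔψ, hΔlim⟩ := hΔ
  intro φ hφ hne
  obtain ⟨hφn, hφp⟩ := hφ
  by_contra hcon
  have hge : (1 : ℝ) ≤ limsup (fun n => ‖φ (Δ n)‖) atTop := not_lt.mp hcon
  -- basic bound
  have hbΔ : ∀ n, ‖φ (Δ n)‖ ≤ 1 := by
    intro n
    calc ‖φ (Δ n)‖ ≤ ‖Δ n‖ := Stmt6Aux.val_le φ hφn _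
      _ = 1 := hΔn n
  -- frequently close to 1
  have hfreq : ∀ m : ℕ, ∃ᶠ n in atTop, 1 - 1 / ((m : ℝ) + 1) < ‖φ (Δ n)‖ := by
    intro m
    by_contra hc
    rw [not_frequently] at hc
    have hc' : ∀ᶠ n in atTop, ‖φ (Δ n)‖ ≤ 1 - 1 / ((m : ℝ) + 1) :=
      hc.mono fun n h => not_lt.mp h
    have hcob : IsCoboundedUnder (· ≤ ·) atTop (fun n => ‖φ (Δ n)‖) :=
      isCoboundedUnder_le_of_eventually_le atTop (Eventually.of_forall fun n => norm_nonneg _)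
    have := limsup_le_of_le hcob hc'
    have hpos : (0 : ℝ) < 1 / ((m : ℝ) + 1) := by positivity
    linarith [hge.trans this]
  -- extract a subsequence with |φ (Δ (g m))| → 1
  obtain ⟨g, hg, hgp⟩ := Filter.extraction_forall_of_frequently hfreq
  -- compactness: a further subsequence converging to some l with |l| = 1
  have hmem : ∀ m, φ (Δ (g m)) ∈ Metric.closedBall (0 : ℂ) 1 := by
    intro m
    rw [Metric.mem_closedBall, dist_zero_right]
    exact hbΔ _
  obtain ⟨l, hl, k, hk, hkt⟩ := (isCompact_closedBall (0 : ℂ) 1).tendsto_subseq hmem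
  set D : ℕ → A := fun j => Δ (g (k j)) with hD_def
  have hDkt : Tendsto (fun j => φ (D j)) atTop (𝓝 l) := hkt
  have hDn : ∀ j, ‖D j‖ = 1 := fun j => hΔn _
  have hDabs : Tendsto (fun j => ‖φ (D j)‖) atTop (𝓝 ‖l‖) := hDkt.norm
  have haux : Tendsto (fun j : ℕ => 1 - 1 / ((j : ℝ) + 1)) atTop (𝓝 1) := by
    have : Tendsto (fun n : ℕ => 1 / ((n : ℝ) + 1)) atTop (𝓝 0) := tendsto_one_div_add_atTop_nhds_zero_nat
    have h2 := tendsto_const_nhds (x := (1:ℝ)) (f := atTop (α := ℕ)) |>.sub this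
    simpa using h2
  have hlo : ∀ j : ℕ, 1 - 1 / ((j : ℝ) + 1) ≤ ‖φ (D j)‖ := by
    intro j
    have h1 := hgp (k j)
    have h2 : 1 - 1 / ((j : ℝ) + 1) ≤ 1 - 1 / ((k j : ℝ) + 1) := by
      have : (j : ℝ) ≤ (k j : ℝ) := by exact_mod_cast hk.le_apply
      have hj : (0:ℝ) < (j:ℝ) + 1 := by positivity
      have hkj : (0:ℝ) < (k j:ℝ) + 1 := by positivity
      have hle2 : (j : ℝ) + 1 ≤ (k j : ℝ) + 1 := by linarith
      have := one_div_le_one_div_of_le hj hle2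
      linarith
    exact h2.trans h1.le
  have hl1 : ‖l‖ = 1 := by
    have hub : ‖l‖ ≤ 1 := by
      rw [Metric.mem_closedBall, dist_zero_right] at hl; exact hl
    have hlb : 1 ≤ ‖l‖ :=
      le_of_tendsto_of_tendsto' haux hDabs hlo
    linarith
  have hDabs1 : Tendsto (fun j => ‖φ (D j)‖) atTop (𝓝 1) := hl1 ▸ hDabs
  -- φ 1 = 1 and ψ 1 = 1
  have hφ1 : φ 1 = 1 := Stmt6Aux.state_one φ hφn hφp D hDn hDabs1
  have hψabs : Tendsto (fun n => ‖ψ (Δ n)‖) atTop (𝓝 1) := by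
    simpa using hΔψ.norm
  have hψ1 : ψ 1 = 1 := Stmt6Aux.state_one ψ hψn hψp Δ hΔn hψabs
  -- the twisted sequence E
  set c : ℂ := starRingEnd ℂ l with hc_def
  set E : ℕ → A := fun j => c • D j with hE_def
  have hcn : ‖c‖ = 1 := by rw [hc_def, RCLike.norm_conj]; exact hl1
  have hEn : ∀ j, ‖E j‖ = 1 := by
    intro j; rw [hE_def]; simp [norm_smul, hcn, hDn j]
  have hnsq : Complex.normSq l = 1 := by
    rw [Complex.normSq_eq_norm_sq, hl1]; norm_num
  have hcc : (starRingEnd ℂ) c * c = 1 := by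
    rw [hc_def, Complex.conj_conj, Complex.mul_conj, hnsq]; norm_num
  have hcl : c * l = 1 := by
    rw [hc_def, mul_comm, Complex.mul_conj, hnsq]; norm_num
  have hEval : Tendsto (fun j => φ (E j)) atTop (𝓝 1) := by
    have heq : (fun j => φ (E j)) = fun j => c * φ (D j) := by
      funext j; rw [hE_def]; simp
    rw [heq, ← hcl]
    exact hDkt.const_mul c
  have hEaE : ∀ (a : A) (j : ℕ), star (E j) * a * E j = star (D j) * a * D j := by
    intro a j
    calc star (c • D j) * a * (c • D j)
        = ((starRingEnd ℂ) c * c) • (star (D j) * a * D j) := by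
          simp [star_smul, smul_mul_assoc, mul_smul_comm, smul_smul, RCLike.star_def, mul_comm]
      _ = star (D j) * a * D j := by rw [hcc, one_smul]
  have hEE_eq : ∀ j : ℕ, star (E j) * E j = star (D j) * D j := by
    intro j
    have := hEaE 1 j
    simpa using this
  -- re φ (star D * D) → 1
  have hDD : Tendsto (fun j => (φ (star (D j) * D j)).re) atTop (𝓝 1) := by
    have hlow : ∀ j, ‖φ (D j)‖ ^ 2 ≤ (φ (star (D j) * D j)).re := by
      intro j
      have h := Stmt6Aux.cs φ hφp 1 (D j)
      simp only [star_one, one_mul] at h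
      rwa [hφ1, Complex.one_re, one_mul] at h
    have hup : ∀ j, (φ (star (D j) * D j)).re ≤ 1 := by
      intro j
      have := Stmt6Aux.re_le_sq φ hφn (D j)
      rwa [hDn j, one_pow] at this
    have hsq1 : Tendsto (fun j => ‖φ (D j)‖ ^ 2) atTop (𝓝 1) := by
      have := hDabs1.mul hDabs1
      simpa [sq] using this
    exact tendsto_of_tendsto_of_tendsto_of_le_of_le hsq1 tendsto_const_nhds hlow hup
  have hEE : Tendsto (fun j => (φ (star (E j) * E j)).re) atTop (𝓝 1) := by
    have heq : (fun j => (φ (star (E j) * E j)).re) = fun j => (φ (star (D j) * D j)).re := by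
      funext j; rw [hEE_eq j]
    rwa [heq]
  -- the error sequence
  set ε : ℕ → ℝ := fun j => (φ (star (1 - E j) * (1 - E j))).re with hε_def
  have hεnn : ∀ j, 0 ≤ ε j := fun j => (Stmt6Aux.pos_parts φ hφp _).1
  have hstarE : ∀ j : ℕ, φ (star (E j)) = (starRingEnd ℂ) (φ (E j)) := by
    intro j
    have h := Stmt6Aux.herm φ hφp (E j) 1
    rw [star_one, one_mul, mul_one] at h
    exact h.symm
  have hεeq : ∀ j, ε j = (φ 1).re - 2 * (φ (E j)).re + (φ (star (E j) * E j)).re := by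
    intro j
    have hexp : star (1 - E j) * (1 - E j)
        = 1 - E j - star (E j) + star (E j) * E j := by
      simp only [star_sub, star_one, sub_mul, mul_sub, one_mul, mul_one]
      noncomm_ring
    rw [hε_def]
    simp only [hexp, map_add, map_sub, hstarE j, Complex.add_re, Complex.sub_re,
      Complex.conj_re]
    ring
  have hε0 : Tendsto ε atTop (𝓝 0) := by
    have hre : Tendsto (fun j => (φ (E j)).re) atTop (𝓝 1) := by
      have := (Complex.continuous_re.tendsto 1).comp hEval
      exact this
    have hcomb : Tendsto (fun j => (φ 1).re - 2 * (φ (E j)).re + (φ (star (E j) * E j)).re)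
        atTop (𝓝 ((φ 1).re - 2 * 1 + 1)) :=
      (tendsto_const_nhds.sub (hre.const_mul 2)).add hEE
    have heq : (fun j => (φ 1).re - 2 * (φ (E j)).re + (φ (star (E j) * E j)).re) = ε := by
      funext j; rw [hεeq j]
    rw [heq] at hcomb
    have : (φ 1).re - 2 * 1 + 1 = 0 := by rw [hφ1]; norm_num
    rwa [this] at hcomb
  -- key convergence
  have key : ∀ a : A, Tendsto (fun j => φ (star (D j) * a * D j)) atTop (𝓝 (φ a)) := by
    intro a
    rw [tendsto_iff_norm_sub_tendsto_zero]
    have hbound : ∀ j, ‖φ (star (D j) * a * D j) - φ a‖ ≤ 2 * ‖a‖ * Real.sqrt (ε j) := by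
      intro j
      rw [← hEaE a j]
      have halg : a - star (E j) * a * E j
          = star (1 - E j) * a + star (star a * E j) * (1 - E j) := by
        simp only [star_sub, star_one, star_mul, star_star, sub_mul, mul_sub, one_mul, mul_one]
        noncomm_ring
      have hsplit : φ a - φ (star (E j) * a * E j)
          = φ (star (1 - E j) * a) + φ (star (star a * E j) * (1 - E j)) := by
        rw [← map_sub, halg, map_add]
      have h1 : ‖φ (star (1 - E j) * a)‖ ≤ Real.sqrt (ε j) * ‖a‖ := by
        refine (Stmt6Aux.cs' φ hφp (1 - E j) a).trans ?_
        exact mul_le_mul_of_nonneg_left (Stmt6Aux.sqrt_re_le φ hφn a) (Real.sqrt_nonneg _)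
      have h2 : ‖φ (star (star a * E j) * (1 - E j))‖ ≤ ‖a‖ * Real.sqrt (ε j) := by
        refine (Stmt6Aux.cs' φ hφp _ _).trans ?_
        refine mul_le_mul_of_nonneg_right ?_ (Real.sqrt_nonneg _)
        refine (Stmt6Aux.sqrt_re_le φ hφn (star a * E j)).trans ?_
        calc ‖star a * E j‖ ≤ ‖star a‖ * ‖E j‖ := norm_mul_le _ _
          _ = ‖a‖ := by rw [norm_star, hEn j, mul_one]
      calc ‖φ (star (E j) * a * E j) - φ a‖
          = ‖φ a - φ (star (E j) * a * E j)‖ := norm_sub_rev _ _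
        _ = ‖φ (star (1 - E j) * a) + φ (star (star a * E j) * (1 - E j))‖ := by rw [hsplit]
        _ ≤ ‖φ (star (1 - E j) * a)‖ + ‖φ (star (star a * E j) * (1 - E j))‖ := norm_add_le _ _
        _ ≤ Real.sqrt (ε j) * ‖a‖ + ‖a‖ * Real.sqrt (ε j) := add_le_add h1 h2
        _ = 2 * ‖a‖ * Real.sqrt (ε j) := by ring
    have hsq0 : Tendsto (fun j => Real.sqrt (ε j)) atTop (𝓝 0) := by
      have := (Real.continuous_sqrt.tendsto 0).comp hε0
      rw [Real.sqrt_zero] at this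
      exact this
    have hlim : Tendsto (fun j => 2 * ‖a‖ * Real.sqrt (ε j)) atTop (𝓝 0) := by
      have := hsq0.const_mul (2 * ‖a‖)
      simpa using this
    exact squeeze_zero (fun j => norm_nonneg _) hbound hlim
  -- |φ a| ≤ |ψ a| for all a
  have hcomp : Tendsto (fun j => g (k j)) atTop atTop := (hg.comp hk).tendsto_atTop
  have hle : ∀ a : A, ‖φ a‖ ≤ ‖ψ a‖ := by
    intro a
    by_contra hlt
    push_neg at hlt
    set m : ℝ := (‖ψ a‖ + ‖φ a‖) / 2 with hm_def
    have hm1 : ‖ψ a‖ < m := by rw [hm_def]; linarith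
    have hm2 : m < ‖φ a‖ := by rw [hm_def]; linarith
    have hbd : IsBoundedUnder (· ≤ ·) atTop (fun n => ‖star (Δ n) * a * Δ n‖) := by
      refine isBoundedUnder_of ⟨‖a‖, fun n => ?_⟩
      calc ‖star (Δ n) * a * Δ n‖ ≤ ‖star (Δ n) * a‖ * ‖Δ n‖ := norm_mul_le _ _
        _ ≤ ‖star (Δ n)‖ * ‖a‖ * ‖Δ n‖ :=
            mul_le_mul_of_nonneg_right (norm_mul_le _ _) (norm_nonneg _)
        _ = ‖a‖ := by rw [norm_star, hΔn n]; ring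
    have hev : ∀ᶠ n in atTop, ‖star (Δ n) * a * Δ n‖ < m :=
      eventually_lt_of_limsup_lt (lt_of_le_of_lt (hΔlim a) hm1) hbd
    have hevD : ∀ᶠ j in atTop, ‖φ (star (D j) * a * D j)‖ ≤ m := by
      filter_upwards [hcomp.eventually hev] with j hj
      exact (Stmt6Aux.val_le φ hφn _).trans hj.le
    have : ‖φ a‖ ≤ m := le_of_tendsto (key a).norm hevD
    linarith
  -- conclude φ = ψ
  apply hne
  apply ContinuousLinearMap.ext
  intro b
  have h := hle (b - ψ b • 1)
  have hφb : φ (b - ψ b • 1) = φ b - ψ b := by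
    rw [map_sub, map_smul, hφ1]; simp [smul_eq_mul]
  have hψb : ψ (b - ψ b • 1) = 0 := by
    rw [map_sub, map_smul, hψ1]; simp [smul_eq_mul]
  rw [hφb, hψb] at h
  simp only [norm_zero] at h
  exact sub_eq_zero.mp (norm_le_zero_iff.mp h)
end

section
/- Let A be a unital C*-algebra, let S ⊂ A be an operator system, and let ψ be a state on A admitting a characteristic sequence (Δ_n) with Δ_n ∈ S for every n. Then ψ has the unique extension property with respect to S. -/
open Filter Topology
open scoped ComplexOrder

/-- The unique extension property of a state with respect to an operator system. -/
def HasUEP {A : Type*} [CStarAlgebra A] (S : Submodule ℂ A) (ψ : A →L[ℂ] ℂ) : Prop :=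
  ∀ φ : A →L[ℂ] ℂ, IsState φ → (∀ s ∈ S, φ s = ψ s) → φ = ψ

set_option maxRecDepth 8000

section Aux
variable {A : Type*} [CStarAlgebra A] (φ : A →L[ℂ] ℂ)

lemma stmt8_pos_im (hpos : ∀ a : A, 0 ≤ φ (star a * a)) (a : A) :
    (φ (star a * a)).im = 0 ∧ 0 ≤ (φ (star a * a)).re := by
  have h := Complex.le_def.mp (hpos a)
  exact ⟨h.2.symm, by simpa using h.1⟩

lemma stmt8_herm (hpos : ∀ a : A, 0 ≤ φ (star a * a)) (a : A) :
    φ (star a) = starRingEnd ℂ (φ a) := by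
  have key : ∀ x y : A, (φ (star x * y) + φ (star y * x)).im = 0 := by
    intro x y
    have h := (stmt8_pos_im φ hpos (x + y)).1
    have e1 := (stmt8_pos_im φ hpos x).1
    have e2 := (stmt8_pos_im φ hpos y).1
    have hx : star (x + y) * (x + y) = star x * x + (star x * y + star y * x) + star y * y := by
      simp only [star_add, add_mul, mul_add]; abel
    rw [hx] at h
    simp only [map_add, Complex.add_im] at h
    simp only [map_add, Complex.add_im]
    linarith
  have k1 := key a 1
  have k2 := key a (Complex.I • (1 : A))
  simp only [mul_one, star_one, one_mul] at k1
  have h2 : star a * (Complex.I • (1:A)) = Complex.I • star a := by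
    simp [mul_smul_comm]
  have h3 : star (Complex.I • (1:A)) * a = (-Complex.I) • a := by
    simp [star_smul, smul_mul_assoc, Complex.conj_I]
  rw [h2, h3, map_smul, map_smul] at k2
  simp only [smul_eq_mul, Complex.add_im, Complex.mul_im, Complex.neg_re, Complex.neg_im,
    Complex.I_re, Complex.I_im] at k2
  simp only [Complex.add_im] at k1
  apply Complex.ext <;> simp only [Complex.conj_re, Complex.conj_im] <;> linarith

lemma stmt8_cs (hpos : ∀ a : A, 0 ≤ φ (star a * a)) (x y : A) :
    ‖φ (star x * y)‖ ^ 2 ≤ (φ (star x * x)).re * (φ (star y * y)).re := by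
  set P := (φ (star x * x)).re with hPdef
  set Q := (φ (star y * y)).re with hQdef
  set B := φ (star x * y) with hBdef
  have hP : 0 ≤ P := (stmt8_pos_im φ hpos x).2
  have hQ : 0 ≤ Q := (stmt8_pos_im φ hpos y).2
  have hBconj : φ (star y * x) = starRingEnd ℂ B := by
    have : star y * x = star (star x * y) := by simp [star_mul]
    rw [this, stmt8_herm φ hpos, hBdef]
  have quad : ∀ r : ℝ, 0 ≤ Q * ‖B‖ ^ 2 * (r * r) + (-(2 * ‖B‖ ^ 2)) * r + P := by
    intro r
    set t : ℂ := (r : ℂ) * starRingEnd ℂ B with htdef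
    have expand : φ (star (x - t • y) * (x - t • y)) =
        φ (star x * x) - starRingEnd ℂ t * φ (star y * x) - t * φ (star x * y)
          + (starRingEnd ℂ t * t) * φ (star y * y) := by
      have key : star (x - t • y) * (x - t • y) =
          star x * x - (starRingEnd ℂ t) • (star y * x) - t • (star x * y)
            + (starRingEnd ℂ t * t) • (star y * y) := by
        simp only [star_sub, star_smul, Complex.star_def, sub_mul, mul_sub, smul_mul_assoc,
          mul_smul_comm]
        module
      rw [key]
      simp only [map_add, map_sub, map_smul, smul_eq_mul]
    have hre := (stmt8_pos_im φ hpos (x - t • y)).2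
    rw [expand] at hre
    have hx := (stmt8_pos_im φ hpos x).1
    have hy := (stmt8_pos_im φ hpos y).1
    have hBB : starRingEnd ℂ B * B = ((‖B‖ ^ 2 : ℝ) : ℂ) := by
      rw [mul_comm, Complex.mul_conj']
      norm_cast
    have hBB' : B * starRingEnd ℂ B = ((‖B‖ ^ 2 : ℝ) : ℂ) := by
      rw [mul_comm]; exact hBB
    have htB : t * B = ((r * ‖B‖ ^ 2 : ℝ) : ℂ) := by
      rw [htdef, mul_assoc, hBB]; push_cast; ring
    have ht : starRingEnd ℂ t * t = ((r ^ 2 * ‖B‖ ^ 2 : ℝ) : ℂ) := by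
      rw [htdef]
      rw [map_mul, Complex.conj_conj, Complex.conj_ofReal]
      push_cast
      ring_nf
      rw [mul_assoc, hBB']
      push_cast; ring
    have hct : starRingEnd ℂ t * starRingEnd ℂ B = ((r * ‖B‖ ^ 2 : ℝ) : ℂ) := by
      rw [← map_mul, htB, Complex.conj_ofReal]
    rw [hBconj, hct, ← hBdef, htB, ht] at hre
    simp only [Complex.sub_re, Complex.add_re, Complex.ofReal_re, Complex.mul_re,
      Complex.ofReal_im, hy, mul_zero, zero_mul, sub_zero] at hre
    nlinarith [hre]
  have hd := discrim_le_zero quad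
  unfold discrim at hd
  rcases (norm_nonneg B).lt_or_eq with h | h
  · nlinarith [hd, mul_pos h h]
  · simp only [← h]; simpa using mul_nonneg hP hQ

end Aux

/-- a state admitting a characteristic sequence lying in the operator
system `S` has the unique extension property with respect to `S`. -/
theorem stmt8 {A : Type*} [CStarAlgebra A]
    (S : Submodule ℂ A) (hS1 : (1 : A) ∈ S) (hSstar : ∀ x ∈ S, star x ∈ S)
    (ψ : A →L[ℂ] ℂ) (hψ : IsState ψ) (Δ : ℕ → A)
    (hΔ : IsCharacteristicSequence ψ Δ) (hΔS : ∀ n, Δ n ∈ S) :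
    HasUEP S ψ := by
  obtain ⟨hψn, hψpos⟩ := hψ
  obtain ⟨hΔ1, hΔψ, hΔlim⟩ := hΔ
  intro φ hφst hφS
  obtain ⟨hφn, hφpos⟩ := hφst
  haveI : Nontrivial A := by
    by_contra h
    haveI : Subsingleton A := not_nontrivial_iff_subsingleton.mp h
    have hz : ψ = 0 := by ext a; rw [Subsingleton.elim a 0]; simp
    rw [hz] at hψn; simp at hψn
  -- ψ 1 = 1
  have hψ1 : ψ 1 = 1 := by
    have h1 : (fun n => ‖star (Δ n) * 1 * Δ n‖) = fun _ => (1:ℝ) := by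
      funext n; rw [mul_one, CStarRing.norm_star_mul_self, hΔ1 n, one_mul]
    have h2 := hΔlim 1
    rw [h1, limsup_const] at h2
    have h3 : ‖ψ 1‖ ≤ 1 := by
      have := ψ.le_opNorm 1
      rw [hψn, one_mul, norm_one] at this
      simpa using this
    have h4 := Complex.le_def.mp (by simpa using hψpos 1 : (0:ℂ) ≤ ψ 1)
    have him : (ψ 1).im = 0 := h4.2.symm
    have hre : 0 ≤ (ψ 1).re := by simpa using h4.1
    have habs : ‖ψ 1‖ = (ψ 1).re := by
      rw [Complex.norm_def, Complex.normSq_apply, him]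
      simpa using Real.sqrt_mul_self hre
    apply Complex.ext
    · simp only [Complex.one_re]; rw [← habs]; linarith
    · simp only [Complex.one_im]; exact him
  have hφ1 : φ 1 = 1 := by rw [hφS 1 hS1, hψ1]
  -- the error sequence
  set e : ℕ → ℝ := fun n => (φ (star (1 - Δ n) * (1 - Δ n))).re with hedef
  have he0 : ∀ n, 0 ≤ e n := fun n => (stmt8_pos_im φ hφpos _).2
  have heub : ∀ n, e n ≤ 2 - 2 * (ψ (Δ n)).re := by
    intro n
    have hx : star (1 - Δ n) * (1 - Δ n)
        = 1 - Δ n - star (Δ n) + star (Δ n) * Δ n := by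
      simp only [star_sub, star_one, sub_mul, mul_sub, one_mul, mul_one]
      abel
    have hrw : φ (star (1 - Δ n) * (1 - Δ n))
        = 1 - ψ (Δ n) - starRingEnd ℂ (ψ (Δ n)) + φ (star (Δ n) * Δ n) := by
      rw [hx]
      simp only [map_add, map_sub, hφ1]
      rw [hφS _ (hΔS n), hφS _ (hSstar _ (hΔS n)), stmt8_herm ψ hψpos]
    have hb : (φ (star (Δ n) * Δ n)).re ≤ 1 := by
      have h1 : (φ (star (Δ n) * Δ n)).re ≤ ‖φ (star (Δ n) * Δ n)‖ := by
        exact Complex.re_le_norm _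
      have h2 := φ.le_opNorm (star (Δ n) * Δ n)
      rw [hφn, one_mul, CStarRing.norm_star_mul_self, hΔ1 n, one_mul] at h2
      linarith
    have : e n = 1 - (ψ (Δ n)).re - (ψ (Δ n)).re + (φ (star (Δ n) * Δ n)).re := by
      rw [hedef]
      simp only [hrw, Complex.add_re, Complex.sub_re, Complex.one_re, Complex.conj_re]
    rw [this]; linarith
  have hetend : Tendsto e atTop (𝓝 0) := by
    have hre : Tendsto (fun n => (ψ (Δ n)).re) atTop (𝓝 1) := by
      have := (Complex.continuous_re.tendsto (1:ℂ)).comp hΔψ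
      simpa [Function.comp_def] using this
    have hg : Tendsto (fun n => 2 - 2 * (ψ (Δ n)).re) atTop (𝓝 0) := by
      have := (tendsto_const_nhds (x := (2:ℝ)) (f := atTop)).sub (hre.const_mul 2)
      simpa using this
    exact squeeze_zero he0 heub hg
  -- conclude
  ext a
  set b := a - ψ a • 1 with hbdef
  have hψb : ψ b = 0 := by rw [hbdef]; simp [hψ1]
  have hφbval : φ b = φ a - ψ a := by rw [hbdef]; simp [hφ1]
  suffices h : φ b = 0 by
    rw [hφbval] at h
    exact sub_eq_zero.mp h
  have hb0 : ‖φ b‖ ≤ 0 := by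
    apply le_of_forall_pos_le_add
    intro ε hε
    rw [zero_add]
    set M := ‖b‖ with hMdef
    have hM0 : 0 ≤ M := norm_nonneg b
    have hδpos : (0:ℝ) < (ε / (3 * (M + 1))) ^ 2 := by positivity
    have hev1 : ∀ᶠ n in atTop, e n < (ε / (3 * (M + 1))) ^ 2 :=
      hetend.eventually_lt_const hδpos
    have hbound : ∀ n, ‖star (Δ n) * b * Δ n‖ ≤ M := by
      intro n
      calc ‖star (Δ n) * b * Δ n‖ ≤ ‖star (Δ n) * b‖ * ‖Δ n‖ := norm_mul_le _ _
        _ ≤ ‖star (Δ n)‖ * ‖b‖ * ‖Δ n‖ := by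
            gcongr
            exact norm_mul_le _ _
        _ = M := by rw [norm_star, hΔ1 n]; ring
    have hev2 : ∀ᶠ n in atTop, ‖star (Δ n) * b * Δ n‖ < ε / 3 := by
      apply eventually_lt_of_limsup_lt
      · calc limsup (fun n => ‖star (Δ n) * b * Δ n‖) atTop ≤ ‖ψ b‖ := hΔlim b
          _ = 0 := by rw [hψb]; simp
          _ < ε / 3 := by positivity
      · exact Filter.isBoundedUnder_of ⟨M, hbound⟩
    obtain ⟨n, hn1, hn2⟩ := (hev1.and hev2).exists
    have hdecomp : φ b = φ (star (1 - Δ n) * b) + φ (star (Δ n) * b * (1 - Δ n))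
        + φ (star (Δ n) * b * Δ n) := by
      rw [← map_add, ← map_add]
      congr 1
      simp only [star_sub, star_one, sub_mul, mul_sub, one_mul, mul_one]
      abel
    -- generic: from X^2 ≤ c^2 * M^2 with c ≥ 0 deduce X ≤ c * M
    have sqrt_step : ∀ X c : ℝ, 0 ≤ X → 0 ≤ c → X ^ 2 ≤ c ^ 2 * M ^ 2 → X ≤ c * M := by
      intro X c hX hc h
      nlinarith [mul_nonneg hc hM0, sq_nonneg (X - c * M), sq_nonneg (X + c * M)]
    have hcM : ε / (3 * (M + 1)) * M ≤ ε / 3 := by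
      rw [div_mul_eq_mul_div, div_le_div_iff₀ (by positivity) (by norm_num)]
      nlinarith
    have hQb : (φ (star b * b)).re ≤ M ^ 2 := by
      have h1 : (φ (star b * b)).re ≤ ‖φ (star b * b)‖ := by
        exact Complex.re_le_norm _
      have h2 := φ.le_opNorm (star b * b)
      rw [hφn, one_mul, CStarRing.norm_star_mul_self] at h2
      nlinarith
    have hT1 : ‖φ (star (1 - Δ n) * b)‖ ≤ ε / 3 := by
      have hcs := stmt8_cs φ hφpos (1 - Δ n) b
      have hsq : ‖φ (star (1 - Δ n) * b)‖ ^ 2 ≤ (ε / (3 * (M + 1))) ^ 2 * M ^ 2 := by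
        calc ‖φ (star (1 - Δ n) * b)‖ ^ 2
            ≤ (φ (star (1 - Δ n) * (1 - Δ n))).re * (φ (star b * b)).re := hcs
          _ ≤ (ε / (3 * (M + 1))) ^ 2 * M ^ 2 := by
              apply mul_le_mul hn1.le hQb (stmt8_pos_im φ hφpos b).2 hδpos.le
      have := sqrt_step _ _ (norm_nonneg _) (by positivity) hsq
      linarith
    have hT2 : ‖φ (star (Δ n) * b * (1 - Δ n))‖ ≤ ε / 3 := by
      have hcs := stmt8_cs φ hφpos (star b * Δ n) (1 - Δ n)
      rw [show star (star b * Δ n) = star (Δ n) * b by simp [star_mul]] at hcs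
      have hxb : (φ (star (Δ n) * b * (star b * Δ n))).re ≤ M ^ 2 := by
        have h1 : (φ (star (Δ n) * b * (star b * Δ n))).re
            ≤ ‖φ (star (Δ n) * b * (star b * Δ n))‖ := by
          exact Complex.re_le_norm _
        have h2 := φ.le_opNorm (star (Δ n) * b * (star b * Δ n))
        rw [hφn, one_mul] at h2
        have h3 : ‖star (Δ n) * b * (star b * Δ n)‖ ≤ M ^ 2 := by
          have h4 : star (Δ n) * b * (star b * Δ n)
              = star (star b * Δ n) * (star b * Δ n) := by
            simp [star_mul, mul_assoc]
          rw [h4, CStarRing.norm_star_mul_self]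
          have h5 : ‖star b * Δ n‖ ≤ M := by
            calc ‖star b * Δ n‖ ≤ ‖star b‖ * ‖Δ n‖ := norm_mul_le _ _
              _ = M := by rw [norm_star, hΔ1 n, mul_one]
          nlinarith [norm_nonneg (star b * Δ n)]
        linarith
      have hsq : ‖φ (star (Δ n) * b * (1 - Δ n))‖ ^ 2
          ≤ (ε / (3 * (M + 1))) ^ 2 * M ^ 2 := by
        calc ‖φ (star (Δ n) * b * (1 - Δ n))‖ ^ 2
            ≤ (φ (star (Δ n) * b * (star b * Δ n))).re
              * (φ (star (1 - Δ n) * (1 - Δ n))).re := hcs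
          _ ≤ M ^ 2 * (ε / (3 * (M + 1))) ^ 2 := by
              apply mul_le_mul hxb hn1.le (stmt8_pos_im φ hφpos (1 - Δ n)).2 (by positivity)
          _ = (ε / (3 * (M + 1))) ^ 2 * M ^ 2 := by ring
      have := sqrt_step _ _ (norm_nonneg _) (by positivity) hsq
      linarith
    have hT3 : ‖φ (star (Δ n) * b * Δ n)‖ ≤ ε / 3 := by
      have h2 := φ.le_opNorm (star (Δ n) * b * Δ n)
      rw [hφn, one_mul] at h2
      linarith
    calc ‖φ b‖ = ‖φ (star (1 - Δ n) * b) + φ (star (Δ n) * b * (1 - Δ n))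
        + φ (star (Δ n) * b * Δ n)‖ := by rw [hdecomp]
      _ ≤ ‖φ (star (1 - Δ n) * b) + φ (star (Δ n) * b * (1 - Δ n))‖
          + ‖φ (star (Δ n) * b * Δ n)‖ := norm_add_le _ _
      _ ≤ ‖φ (star (1 - Δ n) * b)‖ + ‖φ (star (Δ n) * b * (1 - Δ n))‖
          + ‖φ (star (Δ n) * b * Δ n)‖ := by
            have := norm_add_le (φ (star (1 - Δ n) * b)) (φ (star (Δ n) * b * (1 - Δ n)))
            linarith
      _ ≤ ε / 3 + ε / 3 + ε / 3 := by linarith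
      _ = ε := by ring
  exact norm_le_zero_iff.mp hb0
end
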